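/- Per-level privacy of SafeTab-H (the i-th iteration of the main loop satisfies (ρ^HT + ρ^T)-zCDP): Let R, 𝒫, g, s, 𝒯 be as in the stacked count vector setting, and suppose two families of category maps (f_P^HT)_{P∈𝒯} and (f_P^T)_{P∈𝒯} into finite types are given, with stacked count vectors V^HT(D) and V^T(D). Let ρ^HT, ρ^T > 0, and define the mechanism M(D) that outputs the pair (V^HT(D) + Y^HT, V^T(D) + Y^T), where Y^HT and Y^T are independent and each has independent coordinates distributed as N_ℤ(s/(2ρ^HT)) and N_ℤ(s/(2ρ^T)) respectively. Then for all finite multisets D, D' over R whose symmetric difference is 1 and all α ∈ (1, ∞), D_α(M(D) ‖ M(D')) ≤ (ρ^HT + ρ^T)·α. -/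

import Mathlib

set_option maxHeartbeats 1000000


open scoped ENNReal

/-- Rényi divergence of order `α` between two (sub)probability mass functions. -/
noncomputable def renyiDiv {X : Type*} (α : ℝ) (P Q : X → ℝ≥0∞) : EReal :=
  (((α - 1)⁻¹ : ℝ) : EReal) * ENNReal.log (∑' x, P x ^ α * Q x ^ (1 - α))

/-- The discrete Gaussian mass function `N_ℤ(v)` with variance parameter `v = σ²`. -/
noncomputable def discreteGaussian (v : ℝ) (x : ℤ) : ℝ≥0∞ :=
  ENNReal.ofReal
    (Real.exp (-(x : ℝ) ^ 2 / (2 * v)) / ∑' y : ℤ, Real.exp (-(y : ℝ) ^ 2 / (2 * v)))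

/-- The stacked count vector for one population-group level. -/
def stackedCount {R PG : Type*} [DecidableEq PG] {K : PG → Type*}
    [∀ P, DecidableEq (K P)] (T : Finset PG) (g : R → Finset PG)
    (f : (P : PG) → R → K P) (D : Multiset R) :
    ((P : {P : PG // P ∈ T}) × K P.val) → ℤ :=
  fun c => ((D.filter fun r => c.1.val ∈ g r ∧ f c.1.val r = c.2).card : ℤ)

section Aux

open Real Complex

lemma summable_gauss_shift (v : ℝ) (hv : 0 < v) (c : ℝ) :
    Summable fun n : ℤ => rexp (-((n:ℝ) - c)^2/(2*v)) := by
  have hT : 0 < 1/(2*π*v) := by positivity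
  have h := (summable_pow_mul_jacobiTheta₂_term_bound (|c|/(2*π*v)) hT 0).mul_left
    (rexp (-c^2/(2*v)))
  refine h.of_nonneg_of_le (fun n => (exp_pos _).le) (fun n => ?_)
  rw [pow_zero, one_mul, ← Real.exp_add]
  apply Real.exp_le_exp.2
  have h1 : -π * (1/(2*π*v) * (n:ℝ)^2 - 2*(|c|/(2*π*v))*|(n:ℤ)|) =
      -(n:ℝ)^2/(2*v) + |c| * |(n:ℝ)| / v := by
    push_cast
    field_simp
    ring
  rw [h1]
  have h2 : (c * n) ≤ |c| * |(n:ℝ)| := by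
    calc c * n ≤ |c * n| := le_abs_self _
    _ = |c| * |(n:ℝ)| := abs_mul _ _
  have h3 : -c^2/(2*v) + (-(n:ℝ)^2/(2*v) + |c| * |(n:ℝ)|/v)
      = (-c^2 + (-(n:ℝ)^2 + 2*(|c| * |(n:ℝ)|)))/(2*v) := by
    field_simp
  rw [h3, div_le_div_iff₀ (by positivity) (by positivity)]
  nlinarith [h2]

lemma gauss_shift_le (v : ℝ) (hv : 0 < v) (c : ℝ) :
    (∑' n : ℤ, rexp (-((n:ℝ) - c)^2/(2*v))) ≤ ∑' n : ℤ, rexp (-(n:ℝ)^2/(2*v)) := by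
  have hπ := Real.pi_pos
  set a : ℝ := 1/(2*π*v) with ha_def
  have ha : 0 < a := by positivity
  set b : ℝ := c/(2*π*v) with hb_def
  have hpt : ∀ n : ℤ, -((n:ℝ) - c)^2/(2*v) = -c^2/(2*v) + (-π*a*(n:ℝ)^2 + 2*π*b*(n:ℝ)) := by
    intro n
    rw [ha_def, hb_def]
    field_simp
    ring
  have h1 : (∑' n:ℤ, rexp (-((n:ℝ)-c)^2/(2*v)))
      = rexp (-c^2/(2*v)) * ∑' n:ℤ, rexp (-π*a*(n:ℝ)^2 + 2*π*b*(n:ℝ)) := by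
    rw [← tsum_mul_left]
    exact tsum_congr fun n => by rw [← Real.exp_add, ← hpt n]
  have hsumnorm : Summable fun n:ℤ => rexp (π*b^2/a - π*(n:ℝ)^2/a) := by
    have h := (summable_gauss_shift (a/(2*π)) (by positivity) 0).mul_left (rexp (π*b^2/a))
    refine h.congr fun n => ?_
    rw [← Real.exp_add]
    congr 1
    have : -((n:ℝ) - 0)^2/(2*(a/(2*π))) = -π*(n:ℝ)^2/a := by field_simp; ring
    rw [this]; ring
  have hterm : ∀ n:ℤ, -(π:ℂ)/(a:ℂ) * ((n:ℂ) + I*(b:ℂ))^2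
      = ((π*b^2/a - π*(n:ℝ)^2/a : ℝ) : ℂ) + ((-2*π*b*(n:ℝ)/a : ℝ):ℂ)*I := by
    intro n
    have hane : (a:ℂ) ≠ 0 := by exact_mod_cast ha.ne'
    field_simp
    ring_nf
    rw [I_sq]
    push_cast
    ring_nf
    simp [hane]
  have hnorm : ∀ n:ℤ, ‖cexp (-(π:ℂ)/(a:ℂ) * ((n:ℂ) + I*(b:ℂ))^2)‖
      = rexp (π*b^2/a - π*(n:ℝ)^2/a) := by
    intro n
    rw [Complex.norm_exp, hterm n]
    congr 1
    simp only [Complex.add_re, Complex.ofReal_re, Complex.mul_re, Complex.I_re,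
      Complex.I_im, Complex.ofReal_im]
    ring
  have hS : Summable fun n:ℤ => cexp (-(π:ℂ)/(a:ℂ) * ((n:ℂ) + I*(b:ℂ))^2) := by
    apply Summable.of_norm
    simpa only [hnorm] using hsumnorm
  have hpoisson := Complex.tsum_exp_neg_quadratic
    (a := (a:ℂ)) (by simpa using ha) (b:ℂ)
  have hreal : ((∑' n:ℤ, rexp (-π*a*(n:ℝ)^2 + 2*π*b*(n:ℝ)) : ℝ) : ℂ)
      = ∑' n:ℤ, cexp (-(π:ℂ)*(a:ℂ)*(n:ℂ)^2 + 2*(π:ℂ)*(b:ℂ)*(n:ℂ)) := by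
    rw [Complex.ofReal_tsum]
    refine tsum_congr fun n => ?_
    rw [Complex.ofReal_exp]
    congr 1
    push_cast
    ring
  set T1 : ℝ := ∑' n:ℤ, rexp (-π*a*(n:ℝ)^2 + 2*π*b*(n:ℝ)) with hT1
  have hT1nn : 0 ≤ T1 := tsum_nonneg fun n => (exp_pos _).le
  have hb2 : T1 ≤ (1/a^(1/2:ℝ)) * (rexp (π*b^2/a) * ∑' n:ℤ, rexp (-π*(n:ℝ)^2/a)) := by
    have : T1 = ‖((T1:ℝ):ℂ)‖ := by
      rw [Complex.norm_real, Real.norm_of_nonneg hT1nn]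
    rw [this, hreal, hpoisson, norm_mul]
    have hnorm1 : ‖1/(a:ℂ)^(1/2:ℂ)‖ = 1/a^(1/2:ℝ) := by
      rw [show ((1/2 : ℂ)) = ((1/2:ℝ):ℂ) by norm_num, ← Complex.ofReal_cpow ha.le]
      rw [norm_div, Complex.norm_real, norm_one, Real.norm_of_nonneg (rpow_nonneg ha.le _)]
    rw [hnorm1]
    gcongr
    calc ‖∑' n:ℤ, cexp (-(π:ℂ)/(a:ℂ) * ((n:ℂ) + I*(b:ℂ))^2)‖
        ≤ ∑' n:ℤ, ‖cexp (-(π:ℂ)/(a:ℂ) * ((n:ℂ) + I*(b:ℂ))^2)‖ :=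
          norm_tsum_le_tsum_norm (by simpa only [hnorm] using hsumnorm)
      _ = ∑' n:ℤ, rexp (π*b^2/a) * rexp (-π*(n:ℝ)^2/a) := by
          refine tsum_congr fun n => ?_
          rw [hnorm n, ← Real.exp_add]
          congr 1; ring
      _ = rexp (π*b^2/a) * ∑' n:ℤ, rexp (-π*(n:ℝ)^2/a) := tsum_mul_left
  have hcb : rexp (-c^2/(2*v)) * rexp (π*b^2/a) = 1 := by
    rw [← Real.exp_add, ← Real.exp_zero]
    congr 1
    rw [ha_def, hb_def]
    field_simp
    ring
  have hrhs : (∑' n : ℤ, rexp (-(n:ℝ)^2/(2*v)))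
      = (1/a^(1/2:ℝ)) * ∑' n:ℤ, rexp (-π*(n:ℝ)^2/a) := by
    have heq : ∀ n : ℤ, -(n:ℝ)^2/(2*v) = -π*a*(n:ℝ)^2 := by
      intro n; rw [ha_def]; field_simp
    calc (∑' n : ℤ, rexp (-(n:ℝ)^2/(2*v))) = ∑' n : ℤ, rexp (-π*a*(n:ℝ)^2) :=
          tsum_congr fun n => by rw [heq n]
      _ = (1/a^(1/2:ℝ)) * ∑' n:ℤ, rexp (-π/a*(n:ℝ)^2) := Real.tsum_exp_neg_mul_int_sq ha
      _ = (1/a^(1/2:ℝ)) * ∑' n:ℤ, rexp (-π*(n:ℝ)^2/a) := by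
          congr 1
          exact tsum_congr fun n => by congr 1; ring
  rw [h1, hrhs]
  calc rexp (-c^2/(2*v)) * T1
      ≤ rexp (-c^2/(2*v)) * ((1/a^(1/2:ℝ)) * (rexp (π*b^2/a) * ∑' n:ℤ, rexp (-π*(n:ℝ)^2/a))) := by
        gcongr
    _ = (rexp (-c^2/(2*v)) * rexp (π*b^2/a)) * ((1/a^(1/2:ℝ)) * ∑' n:ℤ, rexp (-π*(n:ℝ)^2/a)) := by
        ring
    _ = (1/a^(1/2:ℝ)) * ∑' n:ℤ, rexp (-π*(n:ℝ)^2/a) := by rw [hcb, one_mul]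

lemma summable_gauss (v : ℝ) (hv : 0 < v) :
    Summable fun n : ℤ => rexp (-(n:ℝ)^2/(2*v)) := by
  refine (summable_gauss_shift v hv 0).congr fun n => by norm_num

lemma Z_pos (v : ℝ) (hv : 0 < v) : 0 < ∑' n : ℤ, rexp (-(n:ℝ)^2/(2*v)) :=
  Summable.tsum_pos (summable_gauss v hv) (fun n => (exp_pos _).le) 0 (exp_pos _)

lemma coord_pt (v : ℝ) (hv : 0 < v) (α : ℝ) (a b : ℝ) (n : ℤ) :
    (rexp (-((n:ℝ)-a)^2/(2*v)) / (∑' m : ℤ, rexp (-(m:ℝ)^2/(2*v))))^α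
      * (rexp (-((n:ℝ)-b)^2/(2*v)) / (∑' m : ℤ, rexp (-(m:ℝ)^2/(2*v))))^(1-α)
    = (rexp (α*(α-1)*(a-b)^2/(2*v)) / (∑' m : ℤ, rexp (-(m:ℝ)^2/(2*v))))
      * rexp (-((n:ℝ)-(α*a+(1-α)*b))^2/(2*v)) := by
  set Z := ∑' m : ℤ, rexp (-(m:ℝ)^2/(2*v)) with hZdef
  have hZ : 0 < Z := Z_pos v hv
  rw [Real.div_rpow (exp_pos _).le hZ.le, Real.div_rpow (exp_pos _).le hZ.le,
    ← Real.exp_mul, ← Real.exp_mul]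
  rw [div_mul_div_comm, ← Real.exp_add]
  have hZsplit : Z ^ α * Z ^ (1-α) = Z := by
    rw [← Real.rpow_add hZ]
    norm_num
  rw [hZsplit]
  have hexp : -((n:ℝ)-a)^2/(2*v) * α + -((n:ℝ)-b)^2/(2*v) * (1-α)
      = α*(α-1)*(a-b)^2/(2*v) + -((n:ℝ)-(α*a+(1-α)*b))^2/(2*v) := by
    field_simp
    ring
  rw [hexp, Real.exp_add]
  ring

lemma real_coord (v : ℝ) (hv : 0 < v) (α : ℝ) (a b : ℝ) :
    (∑' n : ℤ, (rexp (-((n:ℝ)-a)^2/(2*v)) / (∑' m : ℤ, rexp (-(m:ℝ)^2/(2*v))))^α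
      * (rexp (-((n:ℝ)-b)^2/(2*v)) / (∑' m : ℤ, rexp (-(m:ℝ)^2/(2*v))))^(1-α))
    ≤ rexp (α*(α-1)*(a-b)^2/(2*v)) := by
  set Z := ∑' m : ℤ, rexp (-(m:ℝ)^2/(2*v)) with hZdef
  have hZ : 0 < Z := Z_pos v hv
  set c : ℝ := α*a+(1-α)*b with hc
  calc (∑' n : ℤ, (rexp (-((n:ℝ)-a)^2/(2*v))/Z)^α * (rexp (-((n:ℝ)-b)^2/(2*v))/Z)^(1-α))
      = (rexp (α*(α-1)*(a-b)^2/(2*v)) / Z) * ∑' n : ℤ, rexp (-((n:ℝ)-c)^2/(2*v)) := by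
        rw [← tsum_mul_left]
        exact tsum_congr fun n => coord_pt v hv α a b n
    _ ≤ (rexp (α*(α-1)*(a-b)^2/(2*v)) / Z) * Z := by
        have := gauss_shift_le v hv c
        gcongr
    _ = rexp (α*(α-1)*(a-b)^2/(2*v)) := by field_simp

lemma coord_bound (v : ℝ) (hv : 0 < v) (α : ℝ) (a b : ℤ) :
    (∑' n : ℤ, (discreteGaussian v (n - a))^α * (discreteGaussian v (n - b))^(1-α))
      ≤ ENNReal.ofReal (rexp (α*(α-1)*((a:ℝ)-(b:ℝ))^2/(2*v))) := by
  have hZ : 0 < ∑' m : ℤ, rexp (-(m:ℝ)^2/(2*v)) := Z_pos v hv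
  set Z := ∑' m : ℤ, rexp (-(m:ℝ)^2/(2*v)) with hZdef
  have hterm : ∀ (m : ℤ) (x : ℝ), discreteGaussian v m ^ x
      = ENNReal.ofReal ((rexp (-(m:ℝ)^2/(2*v)) / Z) ^ x) := by
    intro m x
    rw [discreteGaussian, ← ENNReal.ofReal_rpow_of_pos (by positivity)]
  calc (∑' n : ℤ, (discreteGaussian v (n - a))^α * (discreteGaussian v (n - b))^(1-α))
      = ∑' n : ℤ, ENNReal.ofReal ((rexp (-((n:ℝ)-a)^2/(2*v)) / Z)^α
          * (rexp (-((n:ℝ)-b)^2/(2*v)) / Z)^(1-α)) := by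
        refine tsum_congr fun n => ?_
        rw [hterm (n-a) α, hterm (n-b) (1-α), ← ENNReal.ofReal_mul (by positivity)]
        push_cast
        ring_nf
    _ = ENNReal.ofReal (∑' n : ℤ, (rexp (-((n:ℝ)-a)^2/(2*v)) / Z)^α
          * (rexp (-((n:ℝ)-b)^2/(2*v)) / Z)^(1-α)) := by
        rw [ENNReal.ofReal_tsum_of_nonneg (fun n => by positivity)]
        refine ((summable_gauss_shift v hv (α*(a:ℝ)+(1-α)*b)).mul_left
          (rexp (α*(α-1)*((a:ℝ)-b)^2/(2*v)) / Z)).congr fun n => ?_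
        rw [coord_pt v hv α a b n]
    _ ≤ ENNReal.ofReal (rexp (α*(α-1)*((a:ℝ)-(b:ℝ))^2/(2*v))) :=
        ENNReal.ofReal_le_ofReal (real_coord v hv α a b)

lemma tsum_pi_prod_fin : ∀ (n : ℕ) (F : Fin n → ℤ → ℝ≥0∞),
    ∑' w : Fin n → ℤ, ∏ i, F i (w i) = ∏ i, ∑' m : ℤ, F i m := by
  intro n
  induction n with
  | zero =>
    intro F
    simp [tsum_eq_single (fun (i : Fin 0) => (0:ℤ)) (fun b hb => absurd (Subsingleton.elim b _) hb)]
  | succ n ih =>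
    intro F
    rw [← (Fin.consEquiv (fun _ : Fin (n+1) => ℤ)).tsum_eq]
    rw [ENNReal.tsum_prod']
    have hsplit : ∀ (z : ℤ) (u : Fin n → ℤ),
        (∏ i, F i ((Fin.consEquiv (fun _ : Fin (n+1) => ℤ)) (z, u) i))
        = F 0 z * ∏ i : Fin n, F i.succ (u i) := by
      intro z u
      rw [Fin.prod_univ_succ]
      simp [Fin.consEquiv]
    calc (∑' z : ℤ, ∑' u : Fin n → ℤ, ∏ i, F i ((Fin.consEquiv fun _ => ℤ) (z, u) i))
        = ∑' z : ℤ, ∑' u : Fin n → ℤ, F 0 z * ∏ i : Fin n, F i.succ (u i) := by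
          refine tsum_congr fun z => tsum_congr fun u => hsplit z u
      _ = (∑' z : ℤ, F 0 z) * ∑' u : Fin n → ℤ, ∏ i : Fin n, F i.succ (u i) := by
          rw [← ENNReal.tsum_mul_right]
          exact tsum_congr fun z => by rw [ENNReal.tsum_mul_left]
      _ = (∑' z : ℤ, F 0 z) * ∏ i : Fin n, ∑' m : ℤ, F i.succ m := by rw [ih]
      _ = ∏ i, ∑' m : ℤ, F i m := by rw [Fin.prod_univ_succ]

lemma tsum_pi_prod {I : Type*} [Fintype I] (F : I → ℤ → ℝ≥0∞) :
    ∑' w : I → ℤ, ∏ i, F i (w i) = ∏ i, ∑' n, F i n := by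
  classical
  obtain ⟨n, ⟨e⟩⟩ : ∃ n, Nonempty (I ≃ Fin n) := ⟨Fintype.card I, ⟨Fintype.equivFin I⟩⟩
  rw [← (Equiv.arrowCongr e (Equiv.refl ℤ)).symm.tsum_eq]
  have h1 : ∀ u : Fin n → ℤ,
      (∏ i, F i ((Equiv.arrowCongr e (Equiv.refl ℤ)).symm u i))
      = ∏ j : Fin n, F (e.symm j) (u j) := by
    intro u
    rw [← e.symm.prod_comp fun i => F i ((Equiv.arrowCongr e (Equiv.refl ℤ)).symm u i)]
    refine Finset.prod_congr rfl fun j _ => ?_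
    simp [Equiv.arrowCongr]
  calc (∑' u : Fin n → ℤ, ∏ i, F i ((Equiv.arrowCongr e (Equiv.refl ℤ)).symm u i))
      = ∑' u : Fin n → ℤ, ∏ j : Fin n, F (e.symm j) (u j) := tsum_congr fun u => h1 u
    _ = ∏ j : Fin n, ∑' m : ℤ, F (e.symm j) m := tsum_pi_prod_fin n _
    _ = ∏ i, ∑' m : ℤ, F i m := e.symm.prod_comp fun i => ∑' m : ℤ, F i m

lemma discreteGaussian_zero_var (x : ℤ) : discreteGaussian 0 x = 0 := by
  have hz : (∑' y : ℤ, Real.exp (-(y:ℝ)^2/(2*(0:ℝ)))) = 0 := by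
    have : ∀ y : ℤ, Real.exp (-(y:ℝ)^2/(2*(0:ℝ))) = 1 := by
      intro y; norm_num
    rw [tsum_congr this]
    exact tsum_eq_zero_of_not_summable (by simp [summable_const_iff])
  rw [discreteGaussian, hz]
  simp

lemma stackedCount_cons {R PG : Type*} [DecidableEq R] [Fintype PG] [DecidableEq PG]
    {K : PG → Type*} [∀ P, Fintype (K P)] [∀ P, DecidableEq (K P)]
    (T : Finset PG) (g : R → Finset PG) (f : (P : PG) → R → K P)
    (D : Multiset R) (r : R) (c : (P : {P : PG // P ∈ T}) × K P.val) :
    stackedCount T g f (r ::ₘ D) c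
      = stackedCount T g f D c + (if c.1.val ∈ g r ∧ f c.1.val r = c.2 then 1 else 0) := by
  unfold stackedCount
  rw [Multiset.filter_cons, Multiset.card_add]
  split_ifs <;> simp <;> ring

lemma sens_sum {R PG : Type*} [DecidableEq R] [Fintype PG] [DecidableEq PG]
    {K : PG → Type*} [∀ P, Fintype (K P)] [∀ P, DecidableEq (K P)]
    (T : Finset PG) (g : R → Finset PG) (s : ℕ) (hs : ∀ r : R, (g r).card ≤ s)
    (f : (P : PG) → R → K P) (D D' : Multiset R) (r : R)
    (hD : D' = r ::ₘ D ∨ D = r ::ₘ D') :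
    ∑ c : ((P : {P : PG // P ∈ T}) × K P.val),
      (((stackedCount T g f D c - stackedCount T g f D' c : ℤ) : ℝ))^2 ≤ (s : ℝ) := by
  classical
  have hdiff : ∀ c : ((P : {P : PG // P ∈ T}) × K P.val),
      (((stackedCount T g f D c - stackedCount T g f D' c : ℤ) : ℝ))^2
      = (if c.1.val ∈ g r ∧ f c.1.val r = c.2 then (1:ℝ) else 0) := by
    intro c
    rcases hD with h | h
    · rw [h, stackedCount_cons]
      split_ifs <;> simp
    · rw [h, stackedCount_cons]
      split_ifs <;> simp
  rw [Finset.sum_congr rfl fun c _ => hdiff c]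
  have hsig : (∑ c : ((P : {P : PG // P ∈ T}) × K P.val),
      (if c.1.val ∈ g r ∧ f c.1.val r = c.2 then (1:ℝ) else 0))
      = ∑ P : {P : PG // P ∈ T}, ∑ k : K P.val,
        (if P.val ∈ g r ∧ f P.val r = k then (1:ℝ) else 0) := by
    rw [← Finset.univ_sigma_univ, Finset.sum_sigma]
  rw [hsig]
  have hinner : ∀ P : {P : PG // P ∈ T},
      (∑ k : K P.val, (if P.val ∈ g r ∧ f P.val r = k then (1:ℝ) else 0))
      = (if P.val ∈ g r then (1:ℝ) else 0) := by
    intro P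
    by_cases hP : P.val ∈ g r
    · simp only [hP, true_and, if_pos]
      rw [Finset.sum_ite_eq Finset.univ (f P.val r) (fun _ => (1:ℝ))]
      simp
    · simp [hP]
  rw [Finset.sum_congr rfl fun P _ => hinner P]
  calc (∑ P : {P : PG // P ∈ T}, if P.val ∈ g r then (1:ℝ) else 0)
      = ((Finset.univ.filter (fun P : {P : PG // P ∈ T} => P.val ∈ g r)).card : ℝ) := by
        rw [Finset.sum_boole]
    _ ≤ ((g r).card : ℝ) := by
        have hcard : (Finset.univ.filter
            (fun P : {P : PG // P ∈ T} => P.val ∈ g r)).card ≤ (g r).card := by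
          apply Finset.card_le_card_of_injOn (fun P => P.val)
          · intro P hP
            exact (Finset.mem_filter.1 hP).2
          · intro P _ Q _ h
            exact Subtype.ext h
        exact_mod_cast Nat.cast_le.2 hcard
    _ ≤ (s : ℝ) := Nat.cast_le.2 (hs r)

lemma level_bound {R PG : Type*} [DecidableEq R] [Fintype PG] [DecidableEq PG]
    {K : PG → Type*} [∀ P, Fintype (K P)] [∀ P, DecidableEq (K P)]
    (T : Finset PG) (g : R → Finset PG) (s : ℕ) (hs : ∀ r : R, (g r).card ≤ s)
    (f : (P : PG) → R → K P) (ρ : ℝ) (hρ : 0 < ρ) (hs0 : 0 < s)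
    (D D' : Multiset R) (r : R) (hD : D' = r ::ₘ D ∨ D = r ::ₘ D')
    (α : ℝ) (hα : 1 < α) :
    (∑' w : (((P : {P : PG // P ∈ T}) × K P.val) → ℤ),
      (∏ c, discreteGaussian ((s:ℝ)/(2*ρ)) (w c - stackedCount T g f D c)) ^ α *
      (∏ c, discreteGaussian ((s:ℝ)/(2*ρ)) (w c - stackedCount T g f D' c)) ^ (1-α))
      ≤ ENNReal.ofReal (Real.exp ((α-1) * (α * ρ))) := by
  classical
  set v : ℝ := (s:ℝ)/(2*ρ) with hv_def
  have hv : 0 < v := by positivity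
  set a := stackedCount T g f D with ha
  set b := stackedCount T g f D' with hb
  have hne : ∀ (m : ℤ), discreteGaussian v m ≠ ⊤ := fun m => ENNReal.ofReal_ne_top
  calc (∑' w : (((P : {P : PG // P ∈ T}) × K P.val) → ℤ),
      (∏ c, discreteGaussian v (w c - a c)) ^ α *
      (∏ c, discreteGaussian v (w c - b c)) ^ (1-α))
      = ∑' w : (((P : {P : PG // P ∈ T}) × K P.val) → ℤ),
        ∏ c, (discreteGaussian v (w c - a c)) ^ α * (discreteGaussian v (w c - b c)) ^ (1-α) := by
        refine tsum_congr fun w => ?_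
        rw [← ENNReal.prod_rpow_of_ne_top (fun c _ => hne _) α,
          ← ENNReal.prod_rpow_of_ne_top (fun c _ => hne _) (1-α), ← Finset.prod_mul_distrib]
    _ = ∏ c, ∑' n : ℤ, (discreteGaussian v (n - a c)) ^ α
          * (discreteGaussian v (n - b c)) ^ (1-α) :=
        tsum_pi_prod (fun c n => discreteGaussian v (n - a c) ^ α
          * discreteGaussian v (n - b c) ^ (1-α))
    _ ≤ ∏ c, ENNReal.ofReal (Real.exp (α*(α-1)*((a c : ℝ)-(b c : ℝ))^2/(2*v))) :=
        Finset.prod_le_prod' fun c _ => coord_bound v hv α (a c) (b c)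
    _ = ENNReal.ofReal (Real.exp (∑ c, α*(α-1)*((a c : ℝ)-(b c : ℝ))^2/(2*v))) := by
        rw [Real.exp_sum, ← ENNReal.ofReal_prod_of_nonneg (fun c _ => (Real.exp_pos _).le)]
    _ ≤ ENNReal.ofReal (Real.exp ((α-1) * (α * ρ))) := by
        apply ENNReal.ofReal_le_ofReal
        apply Real.exp_le_exp.2
        have hsum : (∑ c, α*(α-1)*((a c : ℝ)-(b c : ℝ))^2/(2*v))
            = (α*(α-1)/(2*v)) * ∑ c : ((P : {P : PG // P ∈ T}) × K P.val),
              (((a c - b c : ℤ) : ℝ))^2 := by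
          rw [Finset.mul_sum]
          refine Finset.sum_congr rfl fun c _ => ?_
          push_cast
          ring
        rw [hsum]
        have hss := sens_sum T g s hs f D D' r hD
        have h2v : α*(α-1)/(2*v) * (s:ℝ) = (α-1) * (α * ρ) := by
          rw [hv_def]
          have hs' : (0:ℝ) < s := by exact_mod_cast hs0
          field_simp
        calc α*(α-1)/(2*v) * ∑ c : ((P : {P : PG // P ∈ T}) × K P.val),
              (((a c - b c : ℤ) : ℝ))^2
            ≤ α*(α-1)/(2*v) * (s:ℝ) := by
              apply mul_le_mul_of_nonneg_left hss
              apply div_nonneg (by nlinarith) (by positivity)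
          _ = (α-1) * (α * ρ) := h2v

end Aux

/-- Per-level privacy of SafeTab-H: adding independent `N_ℤ(s/(2ρ))` noise to each
coordinate of the household-type and tenure stacked count vectors gives a mechanism
whose Rényi divergence on neighboring databases is at most `(ρ^HT + ρ^T)·α`. -/
theorem safetabH_per_level_zCDP {R PG : Type*} [DecidableEq R] [Fintype PG] [DecidableEq PG]
    {KHT KT : PG → Type*} [∀ P, Fintype (KHT P)] [∀ P, DecidableEq (KHT P)]
    [∀ P, Fintype (KT P)] [∀ P, DecidableEq (KT P)]
    (T : Finset PG) (g : R → Finset PG) (s : ℕ) (hs : ∀ r : R, (g r).card ≤ s)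
    (fHT : (P : PG) → R → KHT P) (fT : (P : PG) → R → KT P)
    (ρHT ρT : ℝ) (hρHT : 0 < ρHT) (hρT : 0 < ρT)
    (M : Multiset R →
      ((((P : {P : PG // P ∈ T}) × KHT P.val) → ℤ) ×
        (((P : {P : PG // P ∈ T}) × KT P.val) → ℤ)) → ℝ≥0∞)
    (hM : ∀ D w, M D w =
      (∏ c, discreteGaussian ((s : ℝ) / (2 * ρHT)) (w.1 c - stackedCount T g fHT D c)) *
      (∏ c, discreteGaussian ((s : ℝ) / (2 * ρT)) (w.2 c - stackedCount T g fT D c)))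
    (D D' : Multiset R) (hneighbor : Multiset.card (D - D' + (D' - D)) = 1) :
    ∀ α : ℝ, 1 < α →
      renyiDiv α (M D) (M D') ≤ (((ρHT + ρT) * α : ℝ) : EReal) := by
  classical
  intro α hα
  have hα1 : (0:ℝ) < α - 1 := by linarith
  rw [renyiDiv]
  have hlogsuff :
      ENNReal.log (∑' x, M D x ^ α * M D' x ^ (1 - α))
        ≤ (((α-1) * ((ρHT + ρT) * α) : ℝ) : EReal) →
      ((((α - 1)⁻¹ : ℝ) : EReal) * ENNReal.log (∑' x, M D x ^ α * M D' x ^ (1 - α))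
        ≤ (((ρHT + ρT) * α : ℝ) : EReal)) := by
    intro hS
    calc (((α - 1)⁻¹ : ℝ) : EReal) * ENNReal.log (∑' x, M D x ^ α * M D' x ^ (1 - α))
        ≤ (((α - 1)⁻¹ : ℝ) : EReal) * (((α-1) * ((ρHT + ρT) * α) : ℝ) : EReal) :=
          mul_le_mul_of_nonneg_left hS (EReal.coe_nonneg.2 (inv_nonneg.2 hα1.le))
      _ = ((((α - 1)⁻¹ * ((α-1) * ((ρHT + ρT) * α))) : ℝ) : EReal) := by
          rw [← EReal.coe_mul]
      _ = (((ρHT + ρT) * α : ℝ) : EReal) := by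
          congr 1
          field_simp
  apply hlogsuff
  rcases Nat.eq_zero_or_pos s with hs0 | hs0
  · -- degenerate case s = 0
    subst hs0
    have hv1 : ((0:ℕ) : ℝ) / (2 * ρHT) = 0 := by norm_num
    have hv2 : ((0:ℕ) : ℝ) / (2 * ρT) = 0 := by norm_num
    by_cases hE : Nonempty ((P : {P : PG // P ∈ T}) × KHT P.val) ∨
        Nonempty ((P : {P : PG // P ∈ T}) × KT P.val)
    · have hM0 : ∀ D0 x, M D0 x = 0 := by
        intro D0 x
        rw [hM]
        rcases hE with hc | hc
        · obtain ⟨c⟩ := hc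
          refine mul_eq_zero.2 (Or.inl ?_)
          refine Finset.prod_eq_zero (Finset.mem_univ c) ?_
          rw [hv1, discreteGaussian_zero_var]
        · obtain ⟨c⟩ := hc
          refine mul_eq_zero.2 (Or.inr ?_)
          refine Finset.prod_eq_zero (Finset.mem_univ c) ?_
          rw [hv2, discreteGaussian_zero_var]
      have hzero : (∑' x, M D x ^ α * M D' x ^ (1 - α)) = 0 := by
        have : ∀ x, M D x ^ α * M D' x ^ (1 - α) = 0 := by
          intro x
          rw [hM0 D x, ENNReal.zero_rpow_of_pos (by linarith), zero_mul]
        rw [tsum_congr this, tsum_zero]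
      rw [hzero, ENNReal.log_zero]
      exact bot_le
    · push_neg at hE
      haveI h1 : IsEmpty ((P : {P : PG // P ∈ T}) × KHT P.val) := hE.1
      haveI h2 : IsEmpty ((P : {P : PG // P ∈ T}) × KT P.val) := hE.2
      have hM1 : ∀ D0 x, M D0 x = 1 := by
        intro D0 x
        rw [hM, Finset.univ_eq_empty, Finset.univ_eq_empty, Finset.prod_empty,
          Finset.prod_empty, mul_one]
      have hone : (∑' x, M D x ^ α * M D' x ^ (1 - α)) = 1 := by
        have : ∀ x, M D x ^ α * M D' x ^ (1 - α) = 1 := by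
          intro x
          rw [hM1 D x, hM1 D' x, ENNReal.one_rpow, ENNReal.one_rpow, mul_one]
        rw [tsum_congr this]
        exact tsum_eq_single default (fun b hb => absurd (Subsingleton.elim b default) hb)
      rw [hone, ENNReal.log_one]
      refine EReal.coe_nonneg.2 ?_
      have : (0:ℝ) ≤ (ρHT + ρT) * α := by positivity
      nlinarith
  · -- main case : s > 0
    have hcard : Multiset.card (D - D') + Multiset.card (D' - D) = 1 := by
      rw [← Multiset.card_add]; exact hneighbor
    obtain ⟨r, hr⟩ : ∃ r, D' = r ::ₘ D ∨ D = r ::ₘ D' := by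
      rcases Nat.add_eq_one_iff.1 hcard with ⟨h1, h2⟩ | ⟨h1, h2⟩
      · have hle : D ≤ D' := by
          have : D - D' = 0 := Multiset.card_eq_zero.1 h1
          exact tsub_eq_zero_iff_le.1 this
        obtain ⟨a, ha⟩ := Multiset.card_eq_one.1 h2
        refine ⟨a, Or.inl ?_⟩
        rw [← tsub_add_cancel_of_le hle, ha, Multiset.singleton_add]
      · have hle : D' ≤ D := by
          have : D' - D = 0 := Multiset.card_eq_zero.1 h2
          exact tsub_eq_zero_iff_le.1 this
        obtain ⟨a, ha⟩ := Multiset.card_eq_one.1 h1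
        refine ⟨a, Or.inr ?_⟩
        rw [← tsub_add_cancel_of_le hle, ha, Multiset.singleton_add]
    set vH : ℝ := (s : ℝ) / (2 * ρHT) with hvH_def
    set vT : ℝ := (s : ℝ) / (2 * ρT) with hvT_def
    set AH := fun u : (((P : {P : PG // P ∈ T}) × KHT P.val) → ℤ) =>
      ∏ c, discreteGaussian vH (u c - stackedCount T g fHT D c) with hAH
    set BH := fun u : (((P : {P : PG // P ∈ T}) × KHT P.val) → ℤ) =>
      ∏ c, discreteGaussian vH (u c - stackedCount T g fHT D' c) with hBH
    set AT := fun u : (((P : {P : PG // P ∈ T}) × KT P.val) → ℤ) =>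
      ∏ c, discreteGaussian vT (u c - stackedCount T g fT D c) with hAT
    set BT := fun u : (((P : {P : PG // P ∈ T}) × KT P.val) → ℤ) =>
      ∏ c, discreteGaussian vT (u c - stackedCount T g fT D' c) with hBT
    have hne : ∀ (v : ℝ) (m : ℤ), discreteGaussian v m ≠ ⊤ := fun v m => ENNReal.ofReal_ne_top
    have hprodne : ∀ u, AH u ≠ ⊤ := fun u => ENNReal.prod_ne_top fun c _ => hne _ _
    have hprodne2 : ∀ u, AT u ≠ ⊤ := fun u => ENNReal.prod_ne_top fun c _ => hne _ _
    have hprodne3 : ∀ u, BH u ≠ ⊤ := fun u => ENNReal.prod_ne_top fun c _ => hne _ _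
    have hprodne4 : ∀ u, BT u ≠ ⊤ := fun u => ENNReal.prod_ne_top fun c _ => hne _ _
    have hsplit : (∑' x, M D x ^ α * M D' x ^ (1 - α))
        = (∑' u, AH u ^ α * BH u ^ (1-α)) * (∑' u, AT u ^ α * BT u ^ (1-α)) := by
      have hpt : ∀ x, M D x ^ α * M D' x ^ (1 - α)
          = (AH x.1 ^ α * BH x.1 ^ (1-α)) * (AT x.2 ^ α * BT x.2 ^ (1-α)) := by
        intro x
        rw [hM D x, hM D' x]
        rw [ENNReal.mul_rpow_of_ne_top (hprodne x.1) (hprodne2 x.2),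
          ENNReal.mul_rpow_of_ne_top (hprodne3 x.1) (hprodne4 x.2)]
        ring
      rw [tsum_congr hpt, ENNReal.tsum_prod']
      calc (∑' u1, ∑' u2, (AH u1 ^ α * BH u1 ^ (1-α)) * (AT u2 ^ α * BT u2 ^ (1-α)))
          = ∑' u1, (AH u1 ^ α * BH u1 ^ (1-α)) * ∑' u2, (AT u2 ^ α * BT u2 ^ (1-α)) :=
            tsum_congr fun u1 => ENNReal.tsum_mul_left
        _ = (∑' u, AH u ^ α * BH u ^ (1-α)) * (∑' u, AT u ^ α * BT u ^ (1-α)) :=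
            ENNReal.tsum_mul_right
    rw [hsplit]
    have hb1 := level_bound T g s hs fHT ρHT hρHT hs0 D D' r hr α hα
    have hb2 := level_bound T g s hs fT ρT hρT hs0 D D' r hr α hα
    have hbound : (∑' u, AH u ^ α * BH u ^ (1-α)) * (∑' u, AT u ^ α * BT u ^ (1-α))
        ≤ ENNReal.ofReal (Real.exp ((α-1) * ((ρHT + ρT) * α))) := by
      calc (∑' u, AH u ^ α * BH u ^ (1-α)) * (∑' u, AT u ^ α * BT u ^ (1-α))
          ≤ ENNReal.ofReal (Real.exp ((α-1) * (α * ρHT)))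
              * ENNReal.ofReal (Real.exp ((α-1) * (α * ρT))) := mul_le_mul' hb1 hb2
        _ = ENNReal.ofReal (Real.exp ((α-1) * ((ρHT + ρT) * α))) := by
            rw [← ENNReal.ofReal_mul (Real.exp_pos _).le, ← Real.exp_add]
            congr 2
            ring
    calc ENNReal.log ((∑' u, AH u ^ α * BH u ^ (1-α)) * (∑' u, AT u ^ α * BT u ^ (1-α)))
        ≤ ENNReal.log (ENNReal.ofReal (Real.exp ((α-1) * ((ρHT + ρT) * α)))) :=
          ENNReal.log_le_log_iff.2 hbound
      _ = (((α-1) * ((ρHT + ρT) * α) : ℝ) : EReal) := by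
          rw [ENNReal.log_ofReal_of_pos (Real.exp_pos _), Real.log_exp]
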